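/- arXiv:2101.04208 — 3 statements merged into one kernel-verified Lean document; each statement's English description precedes it below -/
import Mathlib

section
/- Let n ∈ ℕ, ε > 1, γ > 0, p ∈ [1/2,1), q = 1−p, and let X be a random variable with P(X = √(q/p)) = p and P(X = −√(p/q)) = q. Define L = n^{−1/2}·( (γ/ε)·|E[X³·1_{|X|<ε√n}]| + sup_{0<z<ε√n} min{z,√n}·E[X²·1_{|X|≥z}] ). Then: L = (γ/ε)·√(q³/(np)) + 1, if n ≤ q/p < n·ε² ≤ p/q; L = γ·(p−q)/(ε·√(n·p·q)) + 1, if n ≤ q/p ≤ p/q < n·ε²; L = (γ/ε)·√(q³/(np)) + max{ √(q/(np)), p }, if q/p < n and n·ε² ≤ p/q; L = γ·(p−q)/(ε·√(n·p·q)) + max{ √(q/(np)), p }, if q/p < n ≤ p/q < n·ε²; and L = γ·(p−q)/(ε·√(n·p·q)) + max{ √(q/(np)), √(p³/(n·q)) }, if n > p/q. -/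
open MeasureTheory Real Set

/-- Truncated third moment `E[X³·1_{|X|<z}]`. -/
noncomputable def mu3 {Ω : Type*} [MeasurableSpace Ω] (μ : Measure Ω) (X : Ω → ℝ) (z : ℝ) : ℝ :=
  ∫ ω, (if |X ω| < z then (X ω) ^ 3 else 0) ∂μ

/-- Truncated second moment `E[X²·1_{|X|≥z}]`. -/
noncomputable def sig2 {Ω : Type*} [MeasurableSpace Ω] (μ : Measure Ω) (X : Ω → ℝ) (z : ℝ) : ℝ :=
  ∫ ω, (if z ≤ |X ω| then (X ω) ^ 2 else 0) ∂μ

private lemma sqrt_eq'' {x c : ℝ} (hx : 0 ≤ x) (h : x ^ 2 = c) : x = Real.sqrt c := by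
  rw [← h, Real.sqrt_sq hx]

private lemma two_point_integral {Ω : Type*} [MeasurableSpace Ω] (μ : Measure Ω)
    [IsProbabilityMeasure μ] (p q : ℝ) (hp : 0 ≤ p) (hq : 0 ≤ q) (hpq : p + q = 1)
    (a b : ℝ) (hab : a ≠ b) (X : Ω → ℝ) (hX : Measurable X)
    (hXa : μ {ω | X ω = a} = ENNReal.ofReal p) (hXb : μ {ω | X ω = b} = ENNReal.ofReal q)
    (g : ℝ → ℝ) :
    ∫ ω, g (X ω) ∂μ = p * g a + q * g b := by
  have hA : MeasurableSet (X ⁻¹' {a}) := hX (measurableSet_singleton a)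
  have hB : MeasurableSet (X ⁻¹' {b}) := hX (measurableSet_singleton b)
  have hXa' : μ (X ⁻¹' {a}) = ENNReal.ofReal p := hXa
  have hXb' : μ (X ⁻¹' {b}) = ENNReal.ofReal q := hXb
  have hdisj : Disjoint (X ⁻¹' {a}) (X ⁻¹' {b}) := by
    apply Set.disjoint_left.2
    rintro ω ha hb
    exact hab ((Set.mem_singleton_iff.1 ha).symm.trans (Set.mem_singleton_iff.1 hb))
  have hunion : μ (X ⁻¹' {a} ∪ X ⁻¹' {b}) = 1 := by
    rw [measure_union hdisj hB, hXa', hXb', ← ENNReal.ofReal_add hp hq, hpq,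
      ENNReal.ofReal_one]
  have hcompl : μ ((X ⁻¹' {a} ∪ X ⁻¹' {b})ᶜ) = 0 := by
    rw [measure_compl (hA.union hB) (by simp), hunion, measure_univ, tsub_self]
  have hae : ∀ᵐ ω ∂μ, X ω = a ∨ X ω = b := by
    rw [ae_iff]
    have : {ω | ¬(X ω = a ∨ X ω = b)} = (X ⁻¹' {a} ∪ X ⁻¹' {b})ᶜ := by
      ext ω; simp [not_or]
    rw [this, hcompl]
  have hcong : (fun ω => g (X ω)) =ᵐ[μ]
      fun ω => (X ⁻¹' {a}).indicator (fun _ => g a) ω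
        + (X ⁻¹' {b}).indicator (fun _ => g b) ω := by
    filter_upwards [hae] with ω hω
    rcases hω with h | h
    · simp [Set.indicator_apply, Set.mem_preimage, h, hab]
    · simp [Set.indicator_apply, Set.mem_preimage, h, Ne.symm hab]
  rw [integral_congr_ae hcong,
    integral_add ((integrable_const (g a)).indicator hA) ((integrable_const (g b)).indicator hB),
    integral_indicator_const _ hA, integral_indicator_const _ hB, measureReal_def, measureReal_def, hXa', hXb',
    ENNReal.toReal_ofReal hp, ENNReal.toReal_ofReal hq, smul_eq_mul, smul_eq_mul]

set_option maxHeartbeats 2000000 in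
theorem rozovskii_fraction_g0_two_point
    {Ω : Type*} [MeasurableSpace Ω] (μ : Measure Ω) [IsProbabilityMeasure μ]
    (n : ℕ) (hn : 0 < n) (p : ℝ) (hp : p ∈ Set.Ico (1/2 : ℝ) 1) (q : ℝ) (hq : q = 1 - p)
    (X : Ω → ℝ) (hX : Measurable X)
    (hXp : μ {ω | X ω = Real.sqrt (q / p)} = ENNReal.ofReal p)
    (hXq : μ {ω | X ω = -Real.sqrt (p / q)} = ENNReal.ofReal q)
    (ε γ : ℝ) (hε : 1 < ε) (hγ : 0 < γ)
    (L : ℝ)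
    (hL : L = (Real.sqrt n)⁻¹ *
      (γ / ε * |mu3 μ X (ε * Real.sqrt n)| +
        sSup ((fun z => min z (Real.sqrt n) * sig2 μ X z) ''
          Set.Ioo (0 : ℝ) (ε * Real.sqrt n)))) :
    ((n : ℝ) ≤ q / p → q / p < (n : ℝ) * ε ^ 2 → (n : ℝ) * ε ^ 2 ≤ p / q →
      L = γ / ε * Real.sqrt (q ^ 3 / ((n : ℝ) * p)) + 1) ∧
    ((n : ℝ) ≤ q / p → q / p ≤ p / q → p / q < (n : ℝ) * ε ^ 2 →
      L = γ * (p - q) / (ε * Real.sqrt ((n : ℝ) * p * q)) + 1) ∧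
    (q / p < (n : ℝ) → (n : ℝ) * ε ^ 2 ≤ p / q →
      L = γ / ε * Real.sqrt (q ^ 3 / ((n : ℝ) * p)) +
            max (Real.sqrt (q / ((n : ℝ) * p))) p) ∧
    (q / p < (n : ℝ) → (n : ℝ) ≤ p / q → p / q < (n : ℝ) * ε ^ 2 →
      L = γ * (p - q) / (ε * Real.sqrt ((n : ℝ) * p * q)) +
            max (Real.sqrt (q / ((n : ℝ) * p))) p) ∧
    (p / q < (n : ℝ) →
      L = γ * (p - q) / (ε * Real.sqrt ((n : ℝ) * p * q)) +
            max (Real.sqrt (q / ((n : ℝ) * p))) (Real.sqrt (p ^ 3 / ((n : ℝ) * q)))) := by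
  obtain ⟨hp2, hp1⟩ := hp
  have hp0 : 0 < p := lt_of_lt_of_le (by norm_num) hp2
  have hq0 : 0 < q := by rw [hq]; linarith
  have hqp : q ≤ p := by rw [hq]; linarith
  have hpq1 : p + q = 1 := by rw [hq]; ring
  have hn1 : (1:ℝ) ≤ (n:ℝ) := by exact_mod_cast hn
  have hn0 : (0:ℝ) < (n:ℝ) := by linarith
  set s : ℝ := Real.sqrt n with hsdef
  have hs1 : 1 ≤ s := by
    rw [hsdef, show (1:ℝ) = Real.sqrt 1 by simp]
    exact Real.sqrt_le_sqrt hn1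
  have hs0 : 0 < s := lt_of_lt_of_le one_pos hs1
  have hsn : s ^ 2 = (n:ℝ) := Real.sq_sqrt (n.cast_nonneg)
  set α : ℝ := Real.sqrt (q / p) with hαdef
  set β : ℝ := Real.sqrt (p / q) with hβdef
  have hα0 : 0 < α := Real.sqrt_pos.mpr (div_pos hq0 hp0)
  have hβ0 : 0 < β := Real.sqrt_pos.mpr (div_pos hp0 hq0)
  have hα2 : α ^ 2 = q / p := Real.sq_sqrt (div_pos hq0 hp0).le
  have hβ2 : β ^ 2 = p / q := Real.sq_sqrt (div_pos hp0 hq0).le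
  have hα2' : p * α ^ 2 = q := by rw [hα2]; field_simp
  have hβ2' : q * β ^ 2 = p := by rw [hβ2]; field_simp
  have hα1 : α ≤ 1 := by
    rw [hαdef, show (1:ℝ) = Real.sqrt 1 by simp]
    exact Real.sqrt_le_sqrt (by rw [div_le_one hp0]; linarith)
  have hqq : q / p ≤ p / q := by
    rw [div_le_div_iff₀ hp0 hq0]
    nlinarith [mul_le_mul hqp hqp hq0.le hp0.le]
  have hαβ : α ≤ β := by
    rw [hαdef, hβdef]
    exact Real.sqrt_le_sqrt hqq
  have hε2 : 1 ≤ ε ^ 2 := by nlinarith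
  have hεs1 : 1 < ε * s := by nlinarith
  have hεs0 : 0 < ε * s := by linarith
  have hsεs : s < ε * s := by nlinarith
  have hαεs : α < ε * s := lt_of_le_of_lt hα1 hεs1
  have hεs2 : (ε * s) ^ 2 = (n:ℝ) * ε ^ 2 := by rw [mul_pow, hsn]; ring
  -- sqrt identities
  have hid1 : q * α / s = Real.sqrt (q ^ 3 / ((n:ℝ) * p)) :=
    sqrt_eq'' (by positivity) (by
      rw [div_pow, mul_pow, hα2, hsn]; field_simp)
  have hid2 : α / s = Real.sqrt (q / ((n:ℝ) * p)) :=
    sqrt_eq'' (by positivity) (by rw [div_pow, hα2, hsn, div_div, mul_comm])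
  have hid3 : p * β / s = Real.sqrt (p ^ 3 / ((n:ℝ) * q)) :=
    sqrt_eq'' (by positivity) (by
      rw [div_pow, mul_pow, hβ2, hsn]; field_simp)
  have hid4 : s * Real.sqrt (p * q) = Real.sqrt ((n:ℝ) * p * q) :=
    sqrt_eq'' (by positivity) (by
      rw [mul_pow, hsn, Real.sq_sqrt (by positivity : (0:ℝ) ≤ p * q)]; ring)
  have hpq0 : (0:ℝ) < Real.sqrt (p * q) := Real.sqrt_pos.mpr (by positivity)
  have he1 : β * Real.sqrt (p * q) = p := by
    rw [hβdef, ← Real.sqrt_mul (div_pos hp0 hq0).le,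
      show p / q * (p * q) = p ^ 2 by field_simp, Real.sqrt_sq hp0.le]
  have he2 : α * Real.sqrt (p * q) = q := by
    rw [hαdef, ← Real.sqrt_mul (div_pos hq0 hp0).le,
      show q / p * (p * q) = q ^ 2 by field_simp, Real.sqrt_sq hq0.le]
  have hid5 : p * β - q * α = (p - q) / Real.sqrt (p * q) := by
    rw [eq_div_iff hpq0.ne']
    linear_combination p * he1 - q * he2 + (p - q) * hpq1
  have hβ1 : 1 ≤ β := by
    rw [hβdef, show (1:ℝ) = Real.sqrt 1 by simp]
    exact Real.sqrt_le_sqrt (by rw [le_div_iff₀ hq0]; linarith)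
  clear_value s α β
  -- mu3 values
  have hne : α ≠ -β := by
    intro h
    rw [h] at hα0
    linarith
  have hmu3 : mu3 μ X (ε * s) =
      p * (if |α| < ε * s then α ^ 3 else 0) + q * (if |(-β)| < ε * s then (-β) ^ 3 else 0) :=
    two_point_integral μ p q hp0.le hq0.le hpq1 α (-β) hne X hX hXp hXq
      (fun x => if |x| < ε * s then x ^ 3 else 0)
  -- sig2 values
  have hsig : ∀ z : ℝ, sig2 μ X z =
      (if z ≤ α then q else 0) + (if z ≤ β then p else 0) := by
    intro z
    have h := two_point_integral μ p q hp0.le hq0.le hpq1 α (-β) hne X hX hXp hXq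
      (fun x => if z ≤ |x| then x ^ 2 else 0)
    have h' : sig2 μ X z =
        p * (if z ≤ |α| then α ^ 2 else 0) + q * (if z ≤ |(-β)| then (-β) ^ 2 else 0) := h
    rw [h', abs_of_nonneg hα0.le, abs_neg, abs_of_nonneg hβ0.le, even_two.neg_pow]
    split_ifs with h1 h2 <;>
      first
        | linear_combination hα2' + hβ2'
        | linarith [hαβ]
        | linear_combination hβ2'
        | ring
  -- sup machinery
  have supEq : ∀ V : ℝ, (∃ z ∈ Set.Ioo (0:ℝ) (ε*s), min z s * sig2 μ X z = V) →
      (∀ z ∈ Set.Ioo (0:ℝ) (ε*s), min z s * sig2 μ X z ≤ V) →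
      sSup ((fun z => min z s * sig2 μ X z) '' Set.Ioo (0:ℝ) (ε*s)) = V := by
    rintro V ⟨z₀, hz₀, hfz₀⟩ hub
    apply le_antisymm
    · exact csSup_le ⟨_, ⟨z₀, hz₀, rfl⟩⟩ (by rintro x ⟨z, hz, rfl⟩; exact hub z hz)
    · exact le_csSup ⟨V, by rintro x ⟨z, hz, rfl⟩; exact hub z hz⟩ ⟨z₀, hz₀, hfz₀⟩
  have hqp1 : q + p = 1 := by linarith
  -- mu3 absolute values
  have hv : p * α ^ 3 + q * (-β) ^ 3 = q * α - p * β := by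
    linear_combination α * hα2' - β * hβ2'
  have hmu3A : (n:ℝ) * ε ^ 2 ≤ p / q → |mu3 μ X (ε * s)| = q * α := by
    intro hc
    have hβεs : ε * s ≤ β := by
      rw [sqrt_eq'' hεs0.le hεs2, hβdef]
      exact Real.sqrt_le_sqrt hc
    rw [hmu3, abs_of_nonneg hα0.le, if_pos hαεs, abs_neg, abs_of_nonneg hβ0.le,
      if_neg (not_lt.2 hβεs)]
    rw [abs_of_nonneg (by positivity : (0:ℝ) ≤ p * α ^ 3 + q * 0)]
    linear_combination α * hα2'
  have hmu3B : p / q < (n:ℝ) * ε ^ 2 → |mu3 μ X (ε * s)| = (p - q) / Real.sqrt (p * q) := by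
    intro hc
    have hβεs : β < ε * s := by
      rw [sqrt_eq'' hεs0.le hεs2, hβdef]
      exact Real.sqrt_lt_sqrt (by positivity) hc
    rw [hmu3, abs_of_nonneg hα0.le, if_pos hαεs, abs_neg, abs_of_nonneg hβ0.le, if_pos hβεs]
    have hle : p * α ^ 3 + q * (-β) ^ 3 ≤ 0 := by
      rw [hv]
      linarith [mul_le_of_le_one_right hq0.le hα1, le_mul_of_one_le_right hp0.le hβ1]
    rw [abs_of_nonpos hle, hv, ← hid5]
    ring
  -- sup values
  have hsup1 : (n:ℝ) ≤ q / p →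
      sSup ((fun z => min z s * sig2 μ X z) '' Set.Ioo (0:ℝ) (ε*s)) = s := by
    intro hc
    have hsα : s ≤ α := by rw [hsdef, hαdef]; exact Real.sqrt_le_sqrt hc
    apply supEq
    · refine ⟨s, ⟨hs0, hsεs⟩, ?_⟩
      rw [hsig, if_pos hsα, if_pos (hsα.trans hαβ), min_self, hqp1, mul_one]
    · rintro z ⟨hz0, hz1⟩
      rw [hsig]
      rcases le_or_gt z α with h1 | h1
      · rw [if_pos h1, if_pos (h1.trans hαβ), hqp1, mul_one]
        exact min_le_right z s
      · rw [if_neg (not_le.2 h1)]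
        have h3 : 0 ≤ min z s := le_min hz0.le hs0.le
        have h4 := min_le_right z s
        split_ifs with h2
        · linarith [mul_le_of_le_one_right h3 hp1.le, h4]
        · linarith [hs0]
  have hsup34 : q / p < (n:ℝ) → (n:ℝ) ≤ p / q →
      sSup ((fun z => min z s * sig2 μ X z) '' Set.Ioo (0:ℝ) (ε*s)) = max α (p * s) := by
    intro hc1 hc2
    have hαs : α < s := by rw [hsdef, hαdef]; exact Real.sqrt_lt_sqrt (by positivity) hc1
    have hsβ : s ≤ β := by rw [hsdef, hβdef]; exact Real.sqrt_le_sqrt hc2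
    apply supEq
    · rcases le_total (p * s) α with hm | hm
      · refine ⟨α, ⟨hα0, hαεs⟩, ?_⟩
        rw [hsig, if_pos le_rfl, if_pos hαβ, min_eq_left (hα1.trans hs1), max_eq_left hm,
          hqp1, mul_one]
      · refine ⟨s, ⟨hs0, hsεs⟩, ?_⟩
        rw [hsig, if_neg (not_le.2 hαs), if_pos hsβ, min_self, max_eq_right hm]
        ring
    · rintro z ⟨hz0, hz1⟩
      rw [hsig]
      have h3 : 0 ≤ min z s := le_min hz0.le hs0.le
      have h4 := min_le_right z s
      rcases le_or_gt z α with h1 | h1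
      · rw [if_pos h1, if_pos (h1.trans hαβ), hqp1, mul_one]
        exact le_trans (le_trans (min_le_left z s) h1) (le_max_left _ _)
      · rw [if_neg (not_le.2 h1)]
        split_ifs with h2
        · refine le_trans ?_ (le_max_right α (p * s))
          linarith [mul_le_mul_of_nonneg_right h4 hp0.le]
        · refine le_trans ?_ (le_max_left α (p * s))
          linarith [hα0]
  have hsup5 : p / q < (n:ℝ) →
      sSup ((fun z => min z s * sig2 μ X z) '' Set.Ioo (0:ℝ) (ε*s)) = max α (p * β) := by
    intro hc1
    have hβs : β < s := by rw [hsdef, hβdef]; exact Real.sqrt_lt_sqrt (by positivity) hc1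
    apply supEq
    · rcases le_total (p * β) α with hm | hm
      · refine ⟨α, ⟨hα0, hαεs⟩, ?_⟩
        rw [hsig, if_pos le_rfl, if_pos hαβ, min_eq_left (hα1.trans hs1), max_eq_left hm,
          hqp1, mul_one]
      · have hαβ' : α < β := lt_of_le_of_lt hm
          (by linarith [mul_lt_mul_of_pos_right hp1 hβ0])
        refine ⟨β, ⟨hβ0, lt_trans hβs hsεs⟩, ?_⟩
        rw [hsig, if_neg (not_le.2 hαβ'), if_pos le_rfl, min_eq_left hβs.le,
          max_eq_right hm]
        ring
    · rintro z ⟨hz0, hz1⟩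
      rw [hsig]
      have h3 : 0 ≤ min z s := le_min hz0.le hs0.le
      have h4 := min_le_left z s
      rcases le_or_gt z α with h1 | h1
      · rw [if_pos h1, if_pos (h1.trans hαβ), hqp1, mul_one]
        exact le_trans (le_trans (min_le_left z s) h1) (le_max_left _ _)
      · rw [if_neg (not_le.2 h1)]
        split_ifs with h2
        · refine le_trans ?_ (le_max_right α (p * β))
          linarith [mul_le_mul_of_nonneg_right (h4.trans h2) hp0.le]
        · refine le_trans ?_ (le_max_left α (p * β))
          linarith [hα0]
  have hs' : s ≠ 0 := hs0.ne'
  have hε0 : ε ≠ 0 := by positivity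
  refine ⟨?_, ?_, ?_, ?_, ?_⟩
  · intro h1 h2 h3
    rw [hL, hmu3A h3, hsup1 h1, ← hid1]
    field_simp
  · intro h1 h2 h3
    rw [hL, hmu3B h3, hsup1 h1, ← hid4]
    field_simp
  · intro h1 h2
    have h1' : (n:ℝ) ≤ p / q := le_trans (le_mul_of_one_le_right hn0.le hε2) h2
    rw [hL, hmu3A h2, hsup34 h1 h1', ← hid1, ← hid2]
    rw [mul_add, show max (α / s) p = max (α / s) (p * s / s) by rw [mul_div_cancel_right₀ p hs'],
      max_div_div_right hs0.le, mul_comm s⁻¹ (max α (p * s)), ← div_eq_mul_inv]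
    ring
  · intro h1 h2 h3
    rw [hL, hmu3B h3, hsup34 h1 h2, ← hid4, ← hid2]
    rw [mul_add, show max (α / s) p = max (α / s) (p * s / s) by rw [mul_div_cancel_right₀ p hs'],
      max_div_div_right hs0.le, mul_comm s⁻¹ (max α (p * s)), ← div_eq_mul_inv]
    ring
  · intro h1
    have h2 : q / p < (n:ℝ) := lt_of_le_of_lt hqq h1
    have h3 : p / q < (n:ℝ) * ε ^ 2 :=
      lt_of_lt_of_le h1 (le_mul_of_one_le_right hn0.le hε2)
    rw [hL, hmu3B h3, hsup5 h1, ← hid4, ← hid2, ← hid3]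
    rw [mul_add, max_div_div_right hs0.le, mul_comm s⁻¹ (max α (p * β)), ← div_eq_mul_inv]
    ring
end

section
/- Let n ∈ ℕ, ε > 1, γ > 0, p ∈ [1/2,1), q = 1−p, and let X be a random variable with P(X = √(q/p)) = p and P(X = −√(p/q)) = q. Define L = n^{−1/2}·( γ·|E[X³·1_{|X|<ε√n}]| + sup_{0<z<ε√n} (max{z,√n}/√n)·√n·E[X²·1_{|X|≥z}] ), i.e. L = n^{−1/2}·( γ·|E[X³·1_{|X|<ε√n}]| + sup_{0<z<ε√n} max{z,√n}·E[X²·1_{|X|≥z}] ). Then: L = γ·√(q³/(np)) + max{ √(q/(np)), ε·p }, if n ≤ q/p < n·ε² ≤ p/q; L = γ·(p−q)/√(n·p·q) + max{ √(q/(np)), √(p³/(n·q)) }, if n ≤ q/p ≤ p/q < n·ε²; L = γ·√(q³/(np)) + max{ ε·p, 1 }, if q/p < n < n·ε² ≤ p/q; L = γ·(p−q)/√(n·p·q) + max{ √(p³/(n·q)), 1 }, if q/p < n ≤ p/q < n·ε²; and L = γ·(p−q)/√(n·p·q) + 1, if n > p/q. -/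
open MeasureTheory Real Set

lemma eq_sqrt_of_sq {x y : ℝ} (hx : 0 ≤ x) (h : x ^ 2 = y) : x = Real.sqrt y := by
  rw [← h, Real.sqrt_sq hx]

lemma integral_two_point {Ω : Type*} [MeasurableSpace Ω] (μ : Measure Ω) [IsProbabilityMeasure μ]
    (X : Ω → ℝ) (hX : Measurable X) (va vb p q : ℝ) (hp : 0 ≤ p) (hq : 0 ≤ q)
    (hpq : p + q = 1) (hvab : va ≠ vb)
    (hA : μ {ω | X ω = va} = ENNReal.ofReal p)
    (hB : μ {ω | X ω = vb} = ENNReal.ofReal q)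
    (g : ℝ → ℝ) : ∫ ω, g (X ω) ∂μ = p * g va + q * g vb := by
  have hAm : MeasurableSet {ω | X ω = va} := hX (measurableSet_singleton va)
  have hBm : MeasurableSet {ω | X ω = vb} := hX (measurableSet_singleton vb)
  have hdisj : Disjoint {ω | X ω = va} {ω | X ω = vb} := by
    rw [Set.disjoint_left]
    intro ω h1 h2
    exact hvab ((h1 : X ω = va).symm.trans h2)
  have hU : μ ({ω | X ω = va} ∪ {ω | X ω = vb}) = 1 := by
    rw [measure_union hdisj hBm, hA, hB, ← ENNReal.ofReal_add hp hq, hpq, ENNReal.ofReal_one]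
  have hC : μ ({ω | X ω = va} ∪ {ω | X ω = vb})ᶜ = 0 := by
    rw [measure_compl (hAm.union hBm) (measure_ne_top _ _), hU, measure_univ, tsub_self]
  have hae : ∀ᵐ ω ∂μ, ω ∈ {ω | X ω = va} ∪ {ω | X ω = vb} := by
    rw [MeasureTheory.ae_iff]
    exact hC
  have hvba : vb ≠ va := Ne.symm hvab
  have heq : (fun ω => g (X ω)) =ᵐ[μ]
      fun ω => Set.indicator {ω | X ω = va} (fun _ => g va) ω
             + Set.indicator {ω | X ω = vb} (fun _ => g vb) ω := by
    filter_upwards [hae] with ω hω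
    rcases hω with h1 | h2
    · have h1' : X ω = va := h1
      simp [Set.indicator_apply, Set.mem_setOf_eq, h1', hvab]
    · have h2' : X ω = vb := h2
      simp [Set.indicator_apply, Set.mem_setOf_eq, h2', hvba]
  rw [integral_congr_ae heq,
    integral_add ((integrable_const (g va)).indicator hAm) ((integrable_const (g vb)).indicator hBm),
    integral_indicator_const _ hAm, integral_indicator_const _ hBm, measureReal_def, measureReal_def, hA, hB,
    ENNReal.toReal_ofReal hp, ENNReal.toReal_ofReal hq, smul_eq_mul, smul_eq_mul]

lemma sup_lemma (p q a b s Z : ℝ) (hp : 0 < p) (hq : 0 < q) (hpq : p + q = 1)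
    (ha : 0 < a) (hab : a ≤ b) (hs : 0 < s) (haZ : a < Z) (hsZ : s < Z) :
    sSup ((fun z => max z s * ((if z ≤ a then q else 0) + (if z ≤ b then p else 0))) ''
      Set.Ioo (0:ℝ) Z) = max (max a s) (p * max (min b Z) s) := by
  have hM0 : 0 < max (max a s) (p * max (min b Z) s) :=
    lt_of_lt_of_le ha (le_trans (le_max_left a s) (le_max_left _ _))
  apply csSup_eq_of_forall_le_of_forall_lt_exists_gt
  · exact ⟨_, Set.mem_image_of_mem _ (Set.mem_Ioo.mpr ⟨ha, haZ⟩)⟩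
  · rintro y ⟨z, hz, rfl⟩
    obtain ⟨hz0, hzZ⟩ := Set.mem_Ioo.mp hz
    dsimp only
    by_cases hza : z ≤ a
    · have hzb : z ≤ b := hza.trans hab
      rw [if_pos hza, if_pos hzb, show q + p = 1 by linarith, mul_one]
      exact le_trans (max_le_max hza le_rfl) (le_max_left _ _)
    · push_neg at hza
      by_cases hzb : z ≤ b
      · rw [if_neg (not_le.mpr hza), if_pos hzb, zero_add]
        have h1 : max z s ≤ max (min b Z) s := max_le_max (le_min hzb hzZ.le) le_rfl
        calc max z s * p ≤ max (min b Z) s * p :=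
              mul_le_mul_of_nonneg_right h1 hp.le
          _ = p * max (min b Z) s := mul_comm _ _
          _ ≤ _ := le_max_right _ _
      · rw [if_neg (not_le.mpr hza), if_neg hzb, add_zero, mul_zero]
        exact hM0.le
  · intro w hw
    rcases lt_max_iff.mp hw with h | h
    · refine ⟨_, Set.mem_image_of_mem _ (Set.mem_Ioo.mpr ⟨ha, haZ⟩), ?_⟩
      rw [if_pos le_rfl, if_pos hab, show q + p = 1 by linarith, mul_one]
      exact h
    · by_cases hbZ : b < Z
      · refine ⟨_, Set.mem_image_of_mem _ (Set.mem_Ioo.mpr ⟨lt_of_lt_of_le ha hab, hbZ⟩), ?_⟩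
        rw [if_pos le_rfl]
        have hbs : (0:ℝ) ≤ max b s := le_trans (ha.trans_le hab).le (le_max_left b s)
        have ht : (0:ℝ) ≤ if b ≤ a then q else 0 := by split_ifs; exacts [hq.le, le_rfl]
        have h2 : p * max (min b Z) s ≤ max b s * ((if b ≤ a then q else 0) + p) := by
          rw [min_eq_left hbZ.le]
          calc p * max b s = max b s * p := mul_comm _ _
            _ ≤ max b s * ((if b ≤ a then q else 0) + p) :=
                mul_le_mul_of_nonneg_left (by linarith) hbs
        exact lt_of_lt_of_le h h2
      · push_neg at hbZ
        rw [min_eq_right hbZ, max_eq_left hsZ.le] at h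
        obtain ⟨z, hz1, hz2⟩ := exists_between
          (show max (max a s) (w/p) < Z from
            max_lt (max_lt haZ hsZ) (by rw [div_lt_iff₀ hp]; nlinarith))
        have hza : a < z := lt_of_le_of_lt (le_trans (le_max_left a s) (le_max_left _ _)) hz1
        have hzs : s < z := lt_of_le_of_lt (le_trans (le_max_right a s) (le_max_left _ _)) hz1
        refine ⟨_, Set.mem_image_of_mem _ (Set.mem_Ioo.mpr ⟨hs.trans hzs, hz2⟩), ?_⟩
        rw [if_neg (not_le.mpr hza), if_pos (hz2.le.trans hbZ), zero_add, max_eq_left hzs.le]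
        have hwp : w/p < z := lt_of_le_of_lt (le_max_right _ _) hz1
        calc w = (w/p)*p := by field_simp
          _ < z * p := mul_lt_mul_of_pos_right hwp hp

theorem rozovskii_fraction_g1_two_point
    {Ω : Type*} [MeasurableSpace Ω] (μ : Measure Ω) [IsProbabilityMeasure μ]
    (n : ℕ) (hn : 0 < n) (p : ℝ) (hp : p ∈ Set.Ico (1/2 : ℝ) 1) (q : ℝ) (hq : q = 1 - p)
    (X : Ω → ℝ) (hX : Measurable X)
    (hXp : μ {ω | X ω = Real.sqrt (q / p)} = ENNReal.ofReal p)
    (hXq : μ {ω | X ω = -Real.sqrt (p / q)} = ENNReal.ofReal q)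
    (ε γ : ℝ) (hε : 1 < ε) (hγ : 0 < γ)
    (L : ℝ)
    (hL : L = (Real.sqrt n)⁻¹ *
      (γ * |mu3 μ X (ε * Real.sqrt n)| +
        sSup ((fun z => max z (Real.sqrt n) * sig2 μ X z) ''
          Set.Ioo (0 : ℝ) (ε * Real.sqrt n)))) :
    ((n : ℝ) ≤ q / p → q / p < (n : ℝ) * ε ^ 2 → (n : ℝ) * ε ^ 2 ≤ p / q →
      L = γ * Real.sqrt (q ^ 3 / ((n : ℝ) * p)) +
            max (Real.sqrt (q / ((n : ℝ) * p))) (ε * p)) ∧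
    ((n : ℝ) ≤ q / p → q / p ≤ p / q → p / q < (n : ℝ) * ε ^ 2 →
      L = γ * (p - q) / Real.sqrt ((n : ℝ) * p * q) +
            max (Real.sqrt (q / ((n : ℝ) * p))) (Real.sqrt (p ^ 3 / ((n : ℝ) * q)))) ∧
    (q / p < (n : ℝ) → (n : ℝ) < (n : ℝ) * ε ^ 2 → (n : ℝ) * ε ^ 2 ≤ p / q →
      L = γ * Real.sqrt (q ^ 3 / ((n : ℝ) * p)) + max (ε * p) 1) ∧
    (q / p < (n : ℝ) → (n : ℝ) ≤ p / q → p / q < (n : ℝ) * ε ^ 2 →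
      L = γ * (p - q) / Real.sqrt ((n : ℝ) * p * q) +
            max (Real.sqrt (p ^ 3 / ((n : ℝ) * q))) 1) ∧
    (p / q < (n : ℝ) →
      L = γ * (p - q) / Real.sqrt ((n : ℝ) * p * q) + 1) := by
  obtain ⟨hp1, hp2⟩ := hp
  have hp0 : 0 < p := lt_of_lt_of_le (by norm_num) hp1
  have hq0 : 0 < q := by rw [hq]; linarith
  have hqp : q ≤ p := by rw [hq]; linarith
  have hpq : p + q = 1 := by rw [hq]; ring
  have hn0 : (0:ℝ) < n := by exact_mod_cast hn
  have hn1 : (1:ℝ) ≤ n := by exact_mod_cast hn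
  set s := Real.sqrt (n:ℝ) with hs_def
  set a := Real.sqrt (q/p) with ha_def
  set b := Real.sqrt (p/q) with hb_def
  set Z := ε * s with hZ_def
  have hs2 : s^2 = (n:ℝ) := Real.sq_sqrt hn0.le
  have ha2 : a^2 = q/p := Real.sq_sqrt (by positivity)
  have hb2 : b^2 = p/q := Real.sq_sqrt (by positivity)
  have ha0 : 0 < a := Real.sqrt_pos.mpr (by positivity)
  have hb0 : 0 < b := Real.sqrt_pos.mpr (by positivity)
  have hs1 : 1 ≤ s := by
    rw [hs_def, show (1:ℝ) = Real.sqrt 1 by simp]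
    exact Real.sqrt_le_sqrt hn1
  have hs0 : 0 < s := lt_of_lt_of_le one_pos hs1
  have ha1 : a ≤ 1 := by
    rw [ha_def, show (1:ℝ) = Real.sqrt 1 by simp]
    exact Real.sqrt_le_sqrt (by rw [div_le_one hp0]; exact hqp)
  have hb1 : 1 ≤ b := by
    rw [hb_def, show (1:ℝ) = Real.sqrt 1 by simp]
    exact Real.sqrt_le_sqrt (by rw [le_div_iff₀ hq0]; linarith)
  have hab : a ≤ b := le_trans ha1 hb1
  have hab1 : a * b = 1 := by
    rw [ha_def, hb_def, ← Real.sqrt_mul (by positivity),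
      show q/p*(p/q) = 1 by field_simp, Real.sqrt_one]
  have hsZ : s < Z := by
    rw [hZ_def]; nlinarith
  have haZ : a < Z := lt_of_le_of_lt (ha1.trans hs1) hsZ
  have hvab : a ≠ -b := by intro h; rw [h] at ha0; linarith
  have hZn : Real.sqrt ((n:ℝ) * ε^2) = Z := by
    rw [hZ_def, hs_def, Real.sqrt_mul hn0.le, Real.sqrt_sq (by linarith)]; ring
  -- mu3 value
  have hmuZ : mu3 μ X Z = p * a^3 + q * (if b < Z then (-b)^3 else 0) := by
    have h := integral_two_point μ X hX a (-b) p q hp0.le hq0.le hpq hvab hXp hXq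
      (fun x => if |x| < Z then x^3 else 0)
    rw [show mu3 μ X Z = ∫ ω, (fun x => if |x| < Z then x^3 else 0) (X ω) ∂μ from rfl, h]
    rw [abs_of_pos ha0, abs_neg, abs_of_pos hb0, if_pos haZ]
  have hqa : p * a^3 = q * a := by
    rw [show a^3 = a^2 * a by ring, ha2]; field_simp
  have hpb : q * b^3 = p * b := by
    rw [show b^3 = b^2 * b by ring, hb2]; field_simp
  -- sig2 values
  have hsig : ∀ z, sig2 μ X z = (if z ≤ a then q else 0) + (if z ≤ b then p else 0) := by
    intro z
    have h := integral_two_point μ X hX a (-b) p q hp0.le hq0.le hpq hvab hXp hXq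
      (fun x => if z ≤ |x| then x^2 else 0)
    rw [show sig2 μ X z = ∫ ω, (fun x => if z ≤ |x| then x^2 else 0) (X ω) ∂μ from rfl, h]
    rw [abs_of_pos ha0, abs_neg, abs_of_pos hb0]
    have hpa : p * a^2 = q := by rw [ha2]; field_simp
    have hqb : q * (-b)^2 = p := by rw [neg_pow, hb2]; field_simp
    rw [mul_ite, mul_ite, hpa, hqb, mul_zero, mul_zero]
  have hsup : sSup ((fun z => max z s * sig2 μ X z) '' Set.Ioo (0 : ℝ) Z)
      = max (max a s) (p * max (min b Z) s) := by
    rw [show (fun z => max z s * sig2 μ X z)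
        = (fun z => max z s * ((if z ≤ a then q else 0) + (if z ≤ b then p else 0))) by
      funext z; rw [hsig]]
    exact sup_lemma p q a b s Z hp0 hq0 hpq ha0 hab hs0 haZ hsZ
  rw [hsup] at hL
  -- sqrt identities
  have e2 : Real.sqrt (q/((n:ℝ)*p)) = a/s := by
    refine (eq_sqrt_of_sq (by positivity) ?_).symm
    rw [div_pow, ha2, hs2]; ring
  have e1 : Real.sqrt (q^3/((n:ℝ)*p)) = p*a^3/s := by
    refine (eq_sqrt_of_sq (by positivity) ?_).symm
    rw [show (p*a^3/s)^2 = p^2*(a^2)^3/s^2 by ring, ha2, hs2]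
    field_simp
  have e5 : Real.sqrt (p^3/((n:ℝ)*q)) = p*b/s := by
    refine (eq_sqrt_of_sq (by positivity) ?_).symm
    rw [show (p*b/s)^2 = p^2*b^2/s^2 by ring, hb2, hs2]
    field_simp
  have hqapb : q * a ≤ p * b := mul_le_mul hqp hab ha0.le hp0.le
  have key2 : (p*b - q*a)^2 = (p-q)^2/(p*q) := by
    rw [show (p*b - q*a)^2 = b^2*(p^2) - 2*(a*b)*(p*q) + a^2*(q^2) by ring, hb2, ha2, hab1]
    field_simp
    rw [hq]
    ring
  have e3 : (p*b - q*a)/s = Real.sqrt ((p-q)^2/((n:ℝ)*p*q)) := by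
    refine eq_sqrt_of_sq (div_nonneg (by linarith) hs0.le) ?_
    rw [div_pow, key2, hs2]; ring
  have e4 : (p - q)/Real.sqrt ((n:ℝ)*p*q) = Real.sqrt ((p-q)^2/((n:ℝ)*p*q)) := by
    refine eq_sqrt_of_sq (div_nonneg (by linarith) (Real.sqrt_nonneg _)) ?_
    rw [div_pow, Real.sq_sqrt (by positivity)]
  have egam : γ * (p - q) / Real.sqrt ((n:ℝ)*p*q) = γ * ((p*b - q*a)/s) := by
    rw [mul_div_assoc, e4, ← e3]
  have hmu_full : b < Z → |mu3 μ X Z| = p*b - q*a := by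
    intro hbZ
    rw [hmuZ, if_pos hbZ, show q*(-b)^3 = -(q*b^3) by ring, hpb, hqa,
      show q*a + -(p*b) = -(p*b - q*a) by ring, abs_neg, abs_of_nonneg (by linarith)]
  have hZs : p * Z / s = ε * p := by
    rw [hZ_def]; field_simp
  refine ⟨?_, ?_, ?_, ?_, ?_⟩
  · -- case 1 : s ≤ a, Z ≤ b
    intro h1 h2 h3
    have hsa : s ≤ a := by rw [hs_def, ha_def]; exact Real.sqrt_le_sqrt h1
    have hZb : Z ≤ b := by rw [← hZn, hb_def]; exact Real.sqrt_le_sqrt h3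
    have hbZ : ¬ (b < Z) := not_lt.mpr hZb
    rw [hL, hmuZ, if_neg hbZ, mul_zero, add_zero, abs_of_nonneg (by positivity),
      max_eq_left hsa, min_eq_right hZb, max_eq_left hsZ.le, e1, e2, ← hZs,
      max_div_div_right hs0.le]
    ring
  · -- case 2 : s ≤ a, b < Z
    intro h1 h2 h3
    have hsa : s ≤ a := by rw [hs_def, ha_def]; exact Real.sqrt_le_sqrt h1
    have hbZ : b < Z := by rw [← hZn, hb_def]; exact Real.sqrt_lt_sqrt (by positivity) h3
    have hsb : s ≤ b := hsa.trans hab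
    rw [hL, hmu_full hbZ, max_eq_left hsa, min_eq_left hbZ.le, max_eq_left hsb,
      e2, e5, max_div_div_right hs0.le, egam]
    ring
  · -- case 3 : a < s, Z ≤ b
    intro h1 h2 h3
    have has : a < s := by rw [hs_def, ha_def]; exact Real.sqrt_lt_sqrt (by positivity) h1
    have hZb : Z ≤ b := by rw [← hZn, hb_def]; exact Real.sqrt_le_sqrt h3
    have hbZ : ¬ (b < Z) := not_lt.mpr hZb
    rw [hL, hmuZ, if_neg hbZ, mul_zero, add_zero, abs_of_nonneg (by positivity),
      max_eq_right has.le, min_eq_right hZb, max_eq_left hsZ.le, e1,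
      max_comm (ε * p) 1, ← hZs, show (1:ℝ) = s/s by field_simp, max_div_div_right hs0.le]
    ring
  · -- case 4 : a < s, s ≤ b, b < Z
    intro h1 h2 h3
    have has : a < s := by rw [hs_def, ha_def]; exact Real.sqrt_lt_sqrt (by positivity) h1
    have hsb : s ≤ b := by rw [hs_def, hb_def]; exact Real.sqrt_le_sqrt h2
    have hbZ : b < Z := by rw [← hZn, hb_def]; exact Real.sqrt_lt_sqrt (by positivity) h3
    rw [hL, hmu_full hbZ, max_eq_right has.le, min_eq_left hbZ.le, max_eq_left hsb,
      max_comm (Real.sqrt (p^3/((n:ℝ)*q))) 1, e5, egam,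
      show (1:ℝ) = s/s by field_simp, max_div_div_right hs0.le]
    ring
  · -- case 5 : b < s
    intro h1
    have hbs : b < s := by rw [hs_def, hb_def]; exact Real.sqrt_lt_sqrt (by positivity) h1
    have hbZ : b < Z := hbs.trans hsZ
    rw [hL, hmu_full hbZ, max_eq_right (hab.trans hbs.le), min_eq_left hbZ.le,
      max_eq_right hbs.le, max_eq_left (mul_le_of_le_one_left hs0.le hp2.le), egam,
      show (1:ℝ) = s/s by field_simp]
    ring
end

section
/- Fix ε ∈ (0,1], γ > 0 and p ∈ (1/2,1); write q = 1−p and Δ₁(p) = Φ(√(q/p)) − q. (a) If C ≥ 0 is such that for every n ∈ ℕ and all independent random variables X_1,…,X_n with E X_k = 0, E X_k² < ∞ and B_n² = Σ_k E X_k² > 0 one has Δ_n ≤ C·sup_{0<z<ε}( γ·|M_n(z)| + z·L_n(z) ), then C ≥ Δ₁(p)/ε when p ≤ 1/(ε²+1), and C ≥ Δ₁(p)/max{ √(q/p), γ·√(q³/p) + ε·p } when p > 1/(ε²+1). (b) If instead Δ_n ≤ C·( γ·|M_n(ε)| + sup_{0<z<ε} z·L_n(z) ) for all such n and X_1,…,X_n,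 then C ≥ Δ₁(p)/ε when p ≤ 1/(ε²+1), and C ≥ Δ₁(p)/( γ·√(q³/p) + max{ √(q/p), ε·p } ) when p > 1/(ε²+1). -/
open MeasureTheory ProbabilityTheory Real Set

/-- The standard normal distribution function. -/
noncomputable def Phi (x : ℝ) : ℝ :=
  ∫ t in Set.Iic x, Real.exp (-t ^ 2 / 2) / Real.sqrt (2 * Real.pi)

/-- `B_n = sqrt (Σ E X_k²)`. -/
noncomputable def Bn {Ω : Type} [MeasurableSpace Ω] (μ : Measure Ω) {n : ℕ}
    (X : Fin n → Ω → ℝ) : ℝ :=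
  Real.sqrt (∑ k, ∫ ω, (X k ω) ^ 2 ∂μ)

/-- Uniform distance between the d.f. of the normalized sum and the standard normal d.f. -/
noncomputable def Deltan {Ω : Type} [MeasurableSpace Ω] (μ : Measure Ω) {n : ℕ}
    (X : Fin n → Ω → ℝ) : ℝ :=
  ⨆ x : ℝ, |(μ {ω | (∑ k, X k ω) / Bn μ X < x}).toReal - Phi x|

/-- `M_n(z) = B_n⁻³ Σ E[X_k³ 1_{|X_k| < z B_n}]`. -/
noncomputable def Mn {Ω : Type} [MeasurableSpace Ω] (μ : Measure Ω) {n : ℕ}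
    (X : Fin n → Ω → ℝ) (z : ℝ) : ℝ :=
  (∑ k, ∫ ω, (if |X k ω| < z * Bn μ X then (X k ω) ^ 3 else 0) ∂μ) / (Bn μ X) ^ 3

/-- `L_n(z) = B_n⁻² Σ E[X_k² 1_{|X_k| ≥ z B_n}]` (the Lindeberg fraction). -/
noncomputable def Lnn {Ω : Type} [MeasurableSpace Ω] (μ : Measure Ω) {n : ℕ}
    (X : Fin n → Ω → ℝ) (z : ℝ) : ℝ :=
  (∑ k, ∫ ω, (if z * Bn μ X ≤ |X k ω| then (X k ω) ^ 2 else 0) ∂μ) / (Bn μ X) ^ 2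

/-- Hypotheses on the independent summands: measurability, independence, zero means,
finite second moments, positive total variance. -/
def GoodFamily {Ω : Type} [MeasurableSpace Ω] (μ : Measure Ω) {n : ℕ}
    (X : Fin n → Ω → ℝ) : Prop :=
  (∀ k, Measurable (X k)) ∧
  iIndepFun X μ ∧
  (∀ k, Integrable (fun ω => (X k ω) ^ 2) μ) ∧
  (∀ k, ∫ ω, X k ω ∂μ = 0) ∧
  0 < ∑ k, ∫ ω, (X k ω) ^ 2 ∂μ

open MeasureTheory ProbabilityTheory Real Set

noncomputable def tpm (p q a b : ℝ) : Measure ℝ :=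
  ENNReal.ofReal p • Measure.dirac a + ENNReal.ofReal q • Measure.dirac b

lemma integrable_dirac' (f : ℝ → ℝ) (a : ℝ) : Integrable f (Measure.dirac a) :=
  (integrable_const (f a)).congr (MeasureTheory.ae_eq_dirac f).symm

lemma tpm_integral (p q a b : ℝ) (hp : 0 ≤ p) (hq : 0 ≤ q) (f : ℝ → ℝ)
    (hf : Measurable f) : ∫ x, f x ∂(tpm p q a b) = p * f a + q * f b := by
  rw [tpm, integral_add_measure, integral_smul_measure, integral_smul_measure,
    integral_dirac, integral_dirac]
  · simp [ENNReal.toReal_ofReal, hp, hq, smul_eq_mul]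
  · exact ((integrable_dirac' f a).smul_measure ENNReal.ofReal_ne_top)
  · exact ((integrable_dirac' f b).smul_measure ENNReal.ofReal_ne_top)

lemma tpm_apply (p q a b : ℝ) (s : Set ℝ) :
    tpm p q a b s = ENNReal.ofReal p * s.indicator 1 a + ENNReal.ofReal q * s.indicator 1 b := by
  rw [tpm, Measure.add_apply, Measure.smul_apply, Measure.smul_apply,
    Measure.dirac_apply, Measure.dirac_apply, smul_eq_mul, smul_eq_mul]

lemma tpm_prob (p q a b : ℝ) (hp : 0 ≤ p) (hq : 0 ≤ q) (hpq : p + q = 1) :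
    IsProbabilityMeasure (tpm p q a b) := by
  constructor
  rw [tpm_apply]
  simp [← ENNReal.ofReal_add hp hq, hpq]

noncomputable def PhiX (x : ℝ) : ℝ :=
  ∫ t in Set.Iic x, Real.exp (-t ^ 2 / 2) / Real.sqrt (2 * Real.pi)

lemma tpm_integrable (p q a b : ℝ) (f : ℝ → ℝ) : Integrable f (tpm p q a b) :=
  (((integrable_const (f a)).congr (MeasureTheory.ae_eq_dirac f).symm).smul_measure
      ENNReal.ofReal_ne_top).add_measure
    (((integrable_const (f b)).congr (MeasureTheory.ae_eq_dirac f).symm).smul_measure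
      ENNReal.ofReal_ne_top)

section
variable (p q : ℝ) (hp : p ∈ Set.Ioo (1/2 : ℝ) 1) (hq : q = 1 - p)

example : True := trivial

lemma facts (hp : p ∈ Set.Ioo (1/2 : ℝ) 1) (hq : q = 1 - p) :
    0 < p ∧ 0 < q ∧ q < p ∧ p + q = 1 ∧
    0 < Real.sqrt (q / p) ∧ Real.sqrt (q / p) < 1 ∧ 1 < Real.sqrt (p / q) ∧
    p * Real.sqrt (q / p) ^ 2 = q ∧ q * Real.sqrt (p / q) ^ 2 = p ∧
    p * Real.sqrt (q / p) + q * (- Real.sqrt (p / q)) = 0 ∧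
    p * Real.sqrt (q / p) ^ 3 = q * Real.sqrt (q / p) ∧
    Real.sqrt (q ^ 3 / p) = q * Real.sqrt (q / p) := by
  obtain ⟨hp1, hp2⟩ := hp
  have hp0 : 0 < p := by linarith
  have hq0 : 0 < q := by simp [hq]; linarith
  have hqp : q < p := by rw [hq]; linarith
  have ha2 : Real.sqrt (q / p) ^ 2 = q / p := Real.sq_sqrt (by positivity)
  have hb2 : Real.sqrt (p / q) ^ 2 = p / q := Real.sq_sqrt (by positivity)
  have ha0 : 0 < Real.sqrt (q / p) := Real.sqrt_pos.mpr (by positivity)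
  refine ⟨hp0, hq0, hqp, by rw [hq]; ring, ha0, ?_, ?_, ?_, ?_, ?_, ?_, ?_⟩
  · rw [show (1:ℝ) = Real.sqrt 1 by simp]
    exact Real.sqrt_lt_sqrt (by positivity) (by rw [div_lt_one hp0]; exact hqp)
  · rw [show (1:ℝ) = Real.sqrt 1 by simp]
    exact Real.sqrt_lt_sqrt (by norm_num) (by rw [lt_div_iff₀ hq0]; linarith)
  · rw [ha2]; field_simp
  · rw [hb2]; field_simp
  · have h1 : p * Real.sqrt (q / p) = Real.sqrt (p * q) := by
      rw [show p * q = p ^ 2 * (q / p) by field_simp,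
        Real.sqrt_mul (sq_nonneg p), Real.sqrt_sq hp0.le]
    have h2 : q * Real.sqrt (p / q) = Real.sqrt (p * q) := by
      rw [show p * q = q ^ 2 * (p / q) by field_simp,
        Real.sqrt_mul (sq_nonneg q), Real.sqrt_sq hq0.le]
    rw [mul_neg, h1, ← h2]; ring
  · have : Real.sqrt (q / p) ^ 3 = (q / p) * Real.sqrt (q / p) := by
      rw [pow_succ, ha2]
    rw [this]; field_simp
  · rw [show q ^ 3 / p = q ^ 2 * (q / p) by ring,
      Real.sqrt_mul (sq_nonneg q), Real.sqrt_sq hq0.le]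
end

lemma gauss_eq : (fun t : ℝ => Real.exp (-t ^ 2 / 2) / Real.sqrt (2 * Real.pi))
    = fun t : ℝ => Real.exp (-(1/2) * t ^ 2) / Real.sqrt (2 * Real.pi) := by
  funext t; ring_nf

lemma gauss_integrable :
    Integrable (fun t : ℝ => Real.exp (-t ^ 2 / 2) / Real.sqrt (2 * Real.pi)) := by
  rw [gauss_eq]
  exact (integrable_exp_neg_mul_sq (by norm_num)).div_const _

lemma Phi_nonneg (x : ℝ) : 0 ≤ Phi x := by
  apply setIntegral_nonneg measurableSet_Iic
  intro t _
  positivity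

lemma Phi_le_one (x : ℝ) : Phi x ≤ 1 := by
  have h1 : Phi x ≤ ∫ t : ℝ, Real.exp (-t ^ 2 / 2) / Real.sqrt (2 * Real.pi) := by
    apply setIntegral_le_integral gauss_integrable
    filter_upwards with t
    positivity
  have h2 : ∫ t : ℝ, Real.exp (-t ^ 2 / 2) / Real.sqrt (2 * Real.pi) = 1 := by
    rw [gauss_eq]
    rw [integral_div, integral_gaussian]
    rw [show π / (1/2) = 2 * π by ring]
    exact div_self (Real.sqrt_ne_zero'.mpr (by positivity))
  linarith

lemma construction (p q : ℝ) (hp : p ∈ Set.Ioo (1/2 : ℝ) 1) (hq : q = 1 - p) :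
    ∃ (μ : Measure ℝ) (_ : IsProbabilityMeasure μ),
      GoodFamily μ (fun (_ : Fin 1) => (id : ℝ → ℝ)) ∧
      Phi (Real.sqrt (q / p)) - q ≤ Deltan μ (fun (_ : Fin 1) => (id : ℝ → ℝ)) ∧
      (∀ z, 0 < z → z ≤ Real.sqrt (q / p) →
        Mn μ (fun (_ : Fin 1) => (id : ℝ → ℝ)) z = 0 ∧
        Lnn μ (fun (_ : Fin 1) => (id : ℝ → ℝ)) z = 1) ∧
      (∀ z, Real.sqrt (q / p) < z → z ≤ 1 →
        Mn μ (fun (_ : Fin 1) => (id : ℝ → ℝ)) z = q * Real.sqrt (q / p) ∧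
        Lnn μ (fun (_ : Fin 1) => (id : ℝ → ℝ)) z = p) := by
  obtain ⟨hp0, hq0, hqp, hpq, ha0, ha1, hb1, hpa2, hqb2, hmean, hcube, -⟩ := facts p q hp hq
  set a := Real.sqrt (q / p) with ha_def
  set b := - Real.sqrt (p / q) with hb_def
  have hb0 : b < 0 := by rw [hb_def]; linarith
  have habs_b : |b| = Real.sqrt (p / q) := by rw [hb_def, abs_neg, abs_of_pos]; linarith
  have hb2 : b ^ 2 = Real.sqrt (p / q) ^ 2 := by rw [hb_def]; ring
  set X : Fin 1 → ℝ → ℝ := fun _ => id with hX_def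
  set μ := tpm p q a b with hμ_def
  haveI hprob : IsProbabilityMeasure μ := tpm_prob p q a b hp0.le hq0.le hpq
  have hvar : ∫ x : ℝ, x ^ 2 ∂μ = 1 := by
    rw [hμ_def, tpm_integral p q a b hp0.le hq0.le (fun x => x ^ 2) (measurable_id'.pow_const 2), hb2]
    rw [hpa2] at *; rw [hqb2]; linarith
  have hBn : Bn μ X = 1 := by
    rw [Bn, Fin.sum_univ_one, hX_def]
    simp only [id]
    rw [hvar, Real.sqrt_one]
  have hgood : GoodFamily μ X := by
    refine ⟨fun k => measurable_id, iIndepFun.of_subsingleton, fun k => tpm_integrable p q a b _,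
      fun k => ?_, ?_⟩
    · rw [hX_def]; simp only [id]
      rw [hμ_def, tpm_integral p q a b hp0.le hq0.le (fun x => x) measurable_id']
      exact hmean
    · rw [Fin.sum_univ_one, hX_def]; simp only [id]; rw [hvar]; norm_num
  refine ⟨μ, hprob, hgood, ?_, ?_, ?_⟩
  · -- Deltan lower bound
    have hset : {ω : ℝ | (∑ k : Fin 1, X k ω) / Bn μ X < a} = Set.Iio a := by
      ext ω
      show (∑ k : Fin 1, X k ω) / Bn μ X < a ↔ ω < a
      rw [hBn, div_one]; simp [hX_def]
    have hμset : μ {ω : ℝ | (∑ k : Fin 1, X k ω) / Bn μ X < a} = ENNReal.ofReal q := by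
      rw [hset, hμ_def, tpm_apply]
      rw [Set.indicator_of_notMem (by simp), Set.indicator_of_mem (by simp; linarith)]
      simp
    have hbdd : BddAbove (Set.range fun x : ℝ =>
        |(μ {ω : ℝ | (∑ k : Fin 1, X k ω) / Bn μ X < x}).toReal - Phi x|) := by
      refine ⟨1, fun y hy => ?_⟩
      obtain ⟨x, rfl⟩ := hy
      have h1 : (μ {ω : ℝ | (∑ k : Fin 1, X k ω) / Bn μ X < x}).toReal ≤ 1 := by
        refine ENNReal.toReal_le_of_le_ofReal (by norm_num) ?_
        simpa using prob_le_one
      have h2 : 0 ≤ (μ {ω : ℝ | (∑ k : Fin 1, X k ω) / Bn μ X < x}).toReal :=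
        ENNReal.toReal_nonneg
      have h3 := Phi_nonneg x
      have h4 := Phi_le_one x
      rw [abs_le]; constructor <;> linarith
    have hle := le_ciSup hbdd a
    rw [Deltan]
    refine le_trans ?_ hle
    rw [hμset, ENNReal.toReal_ofReal hq0.le]
    rw [abs_sub_comm]
    exact le_abs_self _
  · -- small z
    intro z hz0 hza
    have hzb : z < Real.sqrt (p / q) := by linarith
    constructor
    · rw [Mn, hBn, Fin.sum_univ_one, hX_def]
      simp only [id, mul_one, one_pow, div_one]
      rw [hμ_def, tpm_integral p q a b hp0.le hq0.le (fun x => if |x| < z then x ^ 3 else 0)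
        (Measurable.ite (measurableSet_lt measurable_abs measurable_const)
          (measurable_id'.pow_const 3) measurable_const)]
      rw [if_neg (by rw [abs_of_pos ha0]; linarith), if_neg (by rw [habs_b]; linarith)]
      ring
    · rw [Lnn, hBn, Fin.sum_univ_one, hX_def]
      simp only [id, mul_one, one_pow, div_one]
      rw [hμ_def, tpm_integral p q a b hp0.le hq0.le (fun x => if z ≤ |x| then x ^ 2 else 0)
        (Measurable.ite (measurableSet_le measurable_const measurable_abs)
          (measurable_id'.pow_const 2) measurable_const)]
      rw [if_pos (by rw [abs_of_pos ha0]; linarith), if_pos (by rw [habs_b]; linarith)]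
      rw [hb2, hpa2, hqb2]; linarith
  · -- big z
    intro z hza hz1
    have hzb : z < Real.sqrt (p / q) := by linarith
    constructor
    · rw [Mn, hBn, Fin.sum_univ_one, hX_def]
      simp only [id, mul_one, one_pow, div_one]
      rw [hμ_def, tpm_integral p q a b hp0.le hq0.le (fun x => if |x| < z then x ^ 3 else 0)
        (Measurable.ite (measurableSet_lt measurable_abs measurable_const)
          (measurable_id'.pow_const 3) measurable_const)]
      rw [if_pos (by rw [abs_of_pos ha0]; linarith), if_neg (by rw [habs_b]; linarith)]
      rw [mul_zero, add_zero, hcube]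
    · rw [Lnn, hBn, Fin.sum_univ_one, hX_def]
      simp only [id, mul_one, one_pow, div_one]
      rw [hμ_def, tpm_integral p q a b hp0.le hq0.le (fun x => if z ≤ |x| then x ^ 2 else 0)
        (Measurable.ite (measurableSet_le measurable_const measurable_abs)
          (measurable_id'.pow_const 2) measurable_const)]
      rw [if_neg (by rw [abs_of_pos ha0]; linarith), if_pos (by rw [habs_b]; linarith)]
      rw [hb2, hqb2]; ring
theorem lower_bound_KE0_KR0 (ε γ : ℝ) (hε : ε ∈ Set.Ioc (0 : ℝ) 1) (hγ : 0 < γ)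
    (p : ℝ) (hp : p ∈ Set.Ioo (1/2 : ℝ) 1) (q : ℝ) (hq : q = 1 - p) :
    (∀ C : ℝ, 0 ≤ C →
      (∀ (Ω : Type) (mΩ : MeasurableSpace Ω) (μ : Measure Ω), IsProbabilityMeasure μ →
        ∀ (n : ℕ) (X : Fin n → Ω → ℝ), GoodFamily μ X →
          Deltan μ X ≤
            C * sSup ((fun z => γ * |Mn μ X z| + z * Lnn μ X z) '' Set.Ioo (0 : ℝ) ε)) →
      ((p ≤ 1 / (ε ^ 2 + 1) → (Phi (Real.sqrt (q / p)) - q) / ε ≤ C) ∧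
       (1 / (ε ^ 2 + 1) < p →
        (Phi (Real.sqrt (q / p)) - q) /
          max (Real.sqrt (q / p)) (γ * Real.sqrt (q ^ 3 / p) + ε * p) ≤ C))) ∧
    (∀ C : ℝ, 0 ≤ C →
      (∀ (Ω : Type) (mΩ : MeasurableSpace Ω) (μ : Measure Ω), IsProbabilityMeasure μ →
        ∀ (n : ℕ) (X : Fin n → Ω → ℝ), GoodFamily μ X →
          Deltan μ X ≤
            C * (γ * |Mn μ X ε| +
              sSup ((fun z => z * Lnn μ X z) '' Set.Ioo (0 : ℝ) ε))) →
      ((p ≤ 1 / (ε ^ 2 + 1) → (Phi (Real.sqrt (q / p)) - q) / ε ≤ C) ∧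
       (1 / (ε ^ 2 + 1) < p →
        (Phi (Real.sqrt (q / p)) - q) /
          (γ * Real.sqrt (q ^ 3 / p) + max (Real.sqrt (q / p)) (ε * p)) ≤ C))) := by
  obtain ⟨hε0, hε1⟩ := hε
  obtain ⟨hp0, hq0, hqp, hpq, ha0, ha1, hb1, hpa2, hqb2, hmean, hcube, hq3⟩ := facts p q hp hq
  obtain ⟨μ, hprob, hgood, hΔ, hsmall, hbig⟩ := construction p q hp hq
  set a := Real.sqrt (q / p) with ha_def
  set X : Fin 1 → ℝ → ℝ := fun _ => id with hX_def
  have hqa0 : 0 < q * a := by positivity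
  have hcase1 : p ≤ 1 / (ε ^ 2 + 1) → ε ≤ a := by
    intro h
    rw [ha_def, Real.le_sqrt' hε0, le_div_iff₀ hp0]
    have h2 : p * (ε ^ 2 + 1) ≤ 1 := by
      have := (le_div_iff₀ (show (0:ℝ) < ε ^ 2 + 1 by positivity)).mp h
      linarith
    nlinarith
  have hcase2 : 1 / (ε ^ 2 + 1) < p → a < ε := by
    intro h
    rw [ha_def, Real.sqrt_lt' hε0, div_lt_iff₀ hp0]
    have h2 : 1 < p * (ε ^ 2 + 1) := by
      have := (div_lt_iff₀ (show (0:ℝ) < ε ^ 2 + 1 by positivity)).mp h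
      linarith
    nlinarith
  constructor
  · intro C hC hyp
    have hΔC := hyp ℝ _ μ hprob 1 X hgood
    constructor
    · intro hcp
      have hεa := hcase1 hcp
      have hsup : sSup ((fun z => γ * |Mn μ X z| + z * Lnn μ X z) '' Set.Ioo (0:ℝ) ε) ≤ ε := by
        apply Real.sSup_le _ hε0.le
        rintro y ⟨z, ⟨hz0, hzε⟩, rfl⟩
        dsimp only
        obtain ⟨hm, hl⟩ := hsmall z hz0 (by linarith)
        rw [hm, hl]
        simp only [abs_zero, mul_zero, mul_one, zero_add]
        linarith
      rw [div_le_iff₀ hε0]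
      calc Phi a - q ≤ Deltan μ X := hΔ
        _ ≤ C * sSup _ := hΔC
        _ ≤ C * ε := mul_le_mul_of_nonneg_left hsup hC
    · intro hcp
      have haε := hcase2 hcp
      set D := max a (γ * Real.sqrt (q ^ 3 / p) + ε * p) with hD_def
      have hD0 : 0 < D := lt_of_lt_of_le ha0 (le_max_left _ _)
      have hsup : sSup ((fun z => γ * |Mn μ X z| + z * Lnn μ X z) '' Set.Ioo (0:ℝ) ε) ≤ D := by
        apply Real.sSup_le _ hD0.le
        rintro y ⟨z, ⟨hz0, hzε⟩, rfl⟩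
        dsimp only
        by_cases hza : z ≤ a
        · obtain ⟨hm, hl⟩ := hsmall z hz0 hza
          rw [hm, hl]
          simp only [abs_zero, mul_zero, mul_one, zero_add]
          exact le_trans hza (le_max_left _ _)
        · push_neg at hza
          obtain ⟨hm, hl⟩ := hbig z hza (by linarith)
          rw [hm, hl, abs_of_nonneg hqa0.le]
          refine le_trans ?_ (le_max_right _ _)
          rw [hq3]
          nlinarith
      rw [div_le_iff₀ hD0]
      calc Phi a - q ≤ Deltan μ X := hΔ
        _ ≤ C * sSup _ := hΔC
        _ ≤ C * D := mul_le_mul_of_nonneg_left hsup hC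
  · intro C hC hyp
    have hΔC := hyp ℝ _ μ hprob 1 X hgood
    constructor
    · intro hcp
      have hεa := hcase1 hcp
      obtain ⟨hmε, -⟩ := hsmall ε hε0 hεa
      have hsup : sSup ((fun z => z * Lnn μ X z) '' Set.Ioo (0:ℝ) ε) ≤ ε := by
        apply Real.sSup_le _ hε0.le
        rintro y ⟨z, ⟨hz0, hzε⟩, rfl⟩
        dsimp only
        obtain ⟨-, hl⟩ := hsmall z hz0 (by linarith)
        rw [hl, mul_one]
        linarith
      rw [div_le_iff₀ hε0]
      calc Phi a - q ≤ Deltan μ X := hΔ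
        _ ≤ C * (γ * |Mn μ X ε| + sSup _) := hΔC
        _ ≤ C * ε := by
            rw [hmε]
            simp only [abs_zero, mul_zero, zero_add]
            exact mul_le_mul_of_nonneg_left hsup hC
    · intro hcp
      have haε := hcase2 hcp
      obtain ⟨hmε, -⟩ := hbig ε haε hε1
      set D := γ * Real.sqrt (q ^ 3 / p) + max a (ε * p) with hD_def
      have hD0 : 0 < D := by
        have : 0 < γ * Real.sqrt (q ^ 3 / p) := by rw [hq3]; positivity
        have : a ≤ max a (ε * p) := le_max_left _ _
        have := ha0
        rw [hD_def]; linarith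
      have hsup : sSup ((fun z => z * Lnn μ X z) '' Set.Ioo (0:ℝ) ε) ≤ max a (ε * p) := by
        apply Real.sSup_le _ (le_trans ha0.le (le_max_left _ _))
        rintro y ⟨z, ⟨hz0, hzε⟩, rfl⟩
        dsimp only
        by_cases hza : z ≤ a
        · obtain ⟨-, hl⟩ := hsmall z hz0 hza
          rw [hl, mul_one]
          exact le_trans hza (le_max_left _ _)
        · push_neg at hza
          obtain ⟨-, hl⟩ := hbig z hza (by linarith)
          rw [hl]
          refine le_trans ?_ (le_max_right _ _)
          nlinarith
      rw [div_le_iff₀ hD0]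
      calc Phi a - q ≤ Deltan μ X := hΔ
        _ ≤ C * (γ * |Mn μ X ε| + sSup _) := hΔC
        _ ≤ C * D := by
            rw [hmε, abs_of_nonneg hqa0.le, hD_def, hq3]
            exact mul_le_mul_of_nonneg_left (add_le_add_right hsup _) hC
end
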